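/- Let j : [0,∞) → ℝ be continuous, let q : ℝ → ℝ be continuous and 1-periodic with ∫₀¹ q(t) dt = 0, and suppose ∫₀^∞ |j(t) − q(t)| dt < ∞. Let g ∈ C¹([0,1]) with g(0) = 1 and g(1) = 0. Then both limits lim_{L→∞} ∫₀^L g(t/L) j(t) dt and lim_{L→∞} ∫_L^{L+1} ( ∫₀^t j(s) ds ) dt exist and are equal; in particular the first limit does not depend on the choice of g. -/

import Mathlib

open MeasureTheory Filter Set intervalIntegral

/-- A continuous 1-periodic function is globally bounded. -/
lemma periodic_bound (P : ℝ → ℝ) (hPc : Continuous P) (hPper : Function.Periodic P 1) :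
    ∃ M : ℝ, 0 ≤ M ∧ ∀ x : ℝ, |P x| ≤ M := by
  obtain ⟨M, hM⟩ := isCompact_Icc.exists_bound_of_continuousOn
    (s := Set.Icc (0:ℝ) 1) hPc.continuousOn
  refine ⟨M, le_trans (abs_nonneg _) (hM 0 ⟨le_refl _, zero_le_one⟩), fun x => ?_⟩
  have h1 : P x = P (Int.fract x) := by
    have h := hPper.sub_int_mul_eq (x := x) ⌊x⌋
    rw [mul_one, Int.self_sub_floor] at h
    exact h.symm
  rw [h1]
  exact hM _ ⟨Int.fract_nonneg x, (Int.fract_lt_one x).le⟩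

/-- The primitive of a continuous periodic function with zero mean is periodic. -/
lemma periodic_primitive (P : ℝ → ℝ) (hPc : Continuous P) (hPper : Function.Periodic P 1)
    (hPmean : (∫ t in (0:ℝ)..1, P t) = 0) :
    Function.Periodic (fun x => ∫ t in (0:ℝ)..x, P t) 1 := by
  intro x
  have h1 : (∫ t in (0:ℝ)..x, P t) + (∫ t in x..(x+1), P t) = ∫ t in (0:ℝ)..(x+1), P t :=
    integral_add_adjacent_intervals (hPc.intervalIntegrable _ _) (hPc.intervalIntegrable _ _)
  have h2 : (∫ t in x..(x+1), P t) = ∫ t in (0:ℝ)..(0+1), P t :=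
    hPper.intervalIntegral_add_eq x 0
  simp only [zero_add] at h2
  rw [h2, hPmean, add_zero] at h1
  exact h1.symm

/-- Polynomial case of the equidistribution lemma. -/
lemma poly_equidistribution (P : ℝ → ℝ) (hPc : Continuous P) (hPper : Function.Periodic P 1)
    (hPmean : (∫ t in (0:ℝ)..1, P t) = 0) (p : Polynomial ℝ) :
    Tendsto (fun L : ℝ => ∫ u in (0:ℝ)..1, p.eval u * P (L * u)) atTop (nhds 0) := by
  set Φ : ℝ → ℝ := fun x => ∫ t in (0:ℝ)..x, P t with hΦdef
  have hΦd : ∀ x : ℝ, HasDerivAt Φ (P x) x := fun x =>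
    (hPc.integral_hasStrictDerivAt 0 x).hasDerivAt
  have hΦc : Continuous Φ := by
    rw [continuous_iff_continuousAt]; exact fun x => (hΦd x).continuousAt
  have hΦper : Function.Periodic Φ 1 := periodic_primitive P hPc hPper hPmean
  obtain ⟨M, hM0, hM⟩ := periodic_bound Φ hΦc hΦper
  obtain ⟨C, hC⟩ := isCompact_Icc.exists_bound_of_continuousOn
    (s := Set.Icc (0:ℝ) 1) (Polynomial.continuous p.derivative).continuousOn
  have hC0 : 0 ≤ C := le_trans (abs_nonneg _) (hC 0 ⟨le_refl _, zero_le_one⟩)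
  set K : ℝ := (|p.eval 1| + C) * M with hK
  have hKnn : 0 ≤ K := by positivity
  have key : ∀ L : ℝ, 1 ≤ L → |∫ u in (0:ℝ)..1, p.eval u * P (L * u)| ≤ K / L := by
    intro L hL
    have hL0 : (0:ℝ) < L := lt_of_lt_of_le one_pos hL
    have hLne : L ≠ 0 := ne_of_gt hL0
    have hv : ∀ x ∈ Set.uIcc (0:ℝ) 1, HasDerivAt (fun y => Φ (L * y) / L) (P (L * x)) x := by
      intro x _
      have h1 : HasDerivAt (fun y : ℝ => L * y) L x := by
        simpa using (hasDerivAt_id x).const_mul L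
      have h2 : HasDerivAt (fun y => Φ (L * y)) (P (L * x) * L) x := (hΦd (L * x)).comp x h1
      have h3 := h2.div_const L
      rwa [mul_div_cancel_right₀ _ hLne] at h3
    have hu : ∀ x ∈ Set.uIcc (0:ℝ) 1, HasDerivAt (fun y => p.eval y) (p.derivative.eval x) x :=
      fun x _ => p.hasDerivAt x
    have hparts := intervalIntegral.integral_mul_deriv_eq_deriv_mul hu hv
      ((Polynomial.continuous p.derivative).intervalIntegrable 0 1)
      ((hPc.comp (continuous_const.mul continuous_id)).intervalIntegrable 0 1)
    rw [hparts]
    have hΦ0 : Φ (L * 0) = 0 := by simp [hΦdef]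
    have hb1 : |∫ x in (0:ℝ)..1, p.derivative.eval x * (Φ (L * x) / L)| ≤ C * M / L * |1 - 0| := by
      rw [← Real.norm_eq_abs]
      apply intervalIntegral.norm_integral_le_of_norm_le_const
      intro x hx
      have hx' : x ∈ Set.Icc (0:ℝ) 1 := Set.Ioc_subset_Icc_self (by simpa using hx)
      rw [Real.norm_eq_abs, abs_mul, abs_div, abs_of_pos hL0]
      calc |p.derivative.eval x| * (|Φ (L * x)| / L)
          ≤ C * (M / L) :=
            mul_le_mul (hC x hx') (by exact div_le_div_of_nonneg_right (hM _) hL0.le) (by positivity) hC0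
        _ = C * M / L := by ring
    rw [hΦ0]
    have hb2 : |p.eval 1 * (Φ (L * 1) / L)| ≤ |p.eval 1| * M / L := by
      rw [abs_mul, abs_div, abs_of_pos hL0]
      calc |p.eval 1| * (|Φ (L * 1)| / L)
          ≤ |p.eval 1| * (M / L) :=
            mul_le_mul_of_nonneg_left (div_le_div_of_nonneg_right (hM _) hL0.le) (abs_nonneg _)
        _ = |p.eval 1| * M / L := by ring
    calc |p.eval 1 * (Φ (L * 1) / L) - p.eval 0 * (0 / L)
          - ∫ x in (0:ℝ)..1, p.derivative.eval x * (Φ (L * x) / L)|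
        ≤ |p.eval 1 * (Φ (L * 1) / L) - p.eval 0 * (0 / L)|
          + |∫ x in (0:ℝ)..1, p.derivative.eval x * (Φ (L * x) / L)| := abs_sub _ _
      _ ≤ |p.eval 1| * M / L + C * M / L * |1 - 0| := by
          refine add_le_add ?_ hb1
          simpa using hb2
      _ = K / L := by rw [hK]; rw [abs_of_nonneg (by norm_num : (0:ℝ) ≤ 1 - 0)]; ring
  rw [tendsto_zero_iff_abs_tendsto_zero]
  apply squeeze_zero' (Filter.Eventually.of_forall fun L => abs_nonneg _)
    (Filter.eventually_atTop.mpr ⟨1, fun L hL => key L hL⟩)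
  exact tendsto_const_nhds.div_atTop tendsto_id

/-- Equidistribution lemma: a continuous periodic function with zero mean converges weakly
to zero against continuous test functions. -/
lemma cont_equidistribution (P : ℝ → ℝ) (hPc : Continuous P) (hPper : Function.Periodic P 1)
    (hPmean : (∫ t in (0:ℝ)..1, P t) = 0) (f : ℝ → ℝ)
    (hf : ContinuousOn f (Set.Icc (0:ℝ) 1)) :
    Tendsto (fun L : ℝ => ∫ u in (0:ℝ)..1, f u * P (L * u)) atTop (nhds 0) := by
  obtain ⟨M, hM0, hM⟩ := periodic_bound P hPc hPper
  rw [NormedAddCommGroup.tendsto_nhds_zero]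
  intro ε hε
  have hM1 : (0:ℝ) < M + 1 := by linarith
  set ε' : ℝ := ε / (2 * (M + 1)) with hε'def
  have hε' : 0 < ε' := by positivity
  obtain ⟨p, hp⟩ := exists_polynomial_near_of_continuousOn 0 1 f hf ε' hε'
  have hpoly := poly_equidistribution P hPc hPper hPmean p
  rw [NormedAddCommGroup.tendsto_nhds_zero] at hpoly
  filter_upwards [hpoly (ε / 2) (by positivity)] with L hpL
  have hPLc : Continuous (fun u => P (L * u)) := hPc.comp (continuous_const.mul continuous_id)
  have hint1 : IntervalIntegrable (fun u => (f u - p.eval u) * P (L * u)) volume 0 1 := by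
    apply ContinuousOn.intervalIntegrable
    rw [Set.uIcc_of_le (zero_le_one : (0:ℝ) ≤ 1)]
    exact ((hf.sub (Polynomial.continuous p).continuousOn).mul hPLc.continuousOn)
  have hint2 : IntervalIntegrable (fun u => p.eval u * P (L * u)) volume 0 1 :=
    ((Polynomial.continuous p).mul hPLc).intervalIntegrable 0 1
  have hsplit : (∫ u in (0:ℝ)..1, f u * P (L * u))
      = (∫ u in (0:ℝ)..1, (f u - p.eval u) * P (L * u))
        + ∫ u in (0:ℝ)..1, p.eval u * P (L * u) := by
    rw [← intervalIntegral.integral_add hint1 hint2]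
    apply intervalIntegral.integral_congr
    intro x _
    ring
  have hb : ‖∫ u in (0:ℝ)..1, (f u - p.eval u) * P (L * u)‖ ≤ ε' * (M + 1) * |1 - 0| := by
    apply intervalIntegral.norm_integral_le_of_norm_le_const
    intro x hx
    have hx' : x ∈ Set.Icc (0:ℝ) 1 := Set.Ioc_subset_Icc_self (by simpa using hx)
    rw [Real.norm_eq_abs, abs_mul]
    have h1 : |f x - p.eval x| ≤ ε' := by
      have := hp x hx'
      rw [abs_sub_comm] at this
      exact this.le
    have h2 : |P (L * x)| ≤ M + 1 := (hM _).trans (by linarith)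
    exact mul_le_mul h1 h2 (abs_nonneg _) hε'.le
  have hbb : ε' * (M + 1) * |1 - 0| = ε / 2 := by
    rw [hε'def, abs_of_nonneg (by norm_num : (0:ℝ) ≤ 1 - 0)]
    field_simp
    ring
  rw [hsplit]
  calc ‖(∫ u in (0:ℝ)..1, (f u - p.eval u) * P (L * u))
        + ∫ u in (0:ℝ)..1, p.eval u * P (L * u)‖
      ≤ ‖∫ u in (0:ℝ)..1, (f u - p.eval u) * P (L * u)‖
        + ‖∫ u in (0:ℝ)..1, p.eval u * P (L * u)‖ := norm_add_le _ _
    _ < ε / 2 + ε / 2 := by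
        apply add_lt_add_of_le_of_lt _ hpL
        rw [← hbb]; exact hb
    _ = ε := by ring

/-- The `q`-part of the first definition converges to the mean of the primitive of `q`. -/
lemma qterm_tendsto (q : ℝ → ℝ) (hq : Continuous q) (hqper : Function.Periodic q 1)
    (hqavg : (∫ t in (0:ℝ)..1, q t) = 0)
    (g : ℝ → ℝ) (hg : ContDiffOn ℝ 1 g (Set.Icc (0:ℝ) 1))
    (hg0 : g 0 = 1) (hg1 : g 1 = 0) :
    Tendsto (fun L : ℝ => ∫ t in (0:ℝ)..L, g (t / L) * q t) atTop
      (nhds (∫ u in (0:ℝ)..1, ∫ s in (0:ℝ)..u, q s)) := by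
  set Q : ℝ → ℝ := fun x => ∫ s in (0:ℝ)..x, q s with hQdef
  set A : ℝ := ∫ u in (0:ℝ)..1, Q u with hAdef
  have hQd : ∀ x : ℝ, HasDerivAt Q (q x) x := fun x =>
    (hq.integral_hasStrictDerivAt 0 x).hasDerivAt
  have hQc : Continuous Q := by
    rw [continuous_iff_continuousAt]; exact fun x => (hQd x).continuousAt
  have hQper : Function.Periodic Q 1 := periodic_primitive q hq hqper hqavg
  set f : ℝ → ℝ := fun x => derivWithin g (Set.Icc (0:ℝ) 1) x with hfdef
  have hfc : ContinuousOn f (Set.Icc (0:ℝ) 1) :=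
    hg.continuousOn_derivWithin (uniqueDiffOn_Icc one_pos) le_rfl
  have hgc : ContinuousOn g (Set.Icc (0:ℝ) 1) := hg.continuousOn
  have hgderiv : ∀ x ∈ Set.Ioo (0:ℝ) 1, HasDerivAt g (f x) x := by
    intro x hx
    have h1 : DifferentiableWithinAt ℝ g (Set.Icc (0:ℝ) 1) x :=
      (hg.differentiableOn one_ne_zero) x (Set.Ioo_subset_Icc_self hx)
    exact h1.hasDerivWithinAt.hasDerivAt (Icc_mem_nhds hx.1 hx.2)
  have hfint : IntervalIntegrable f volume 0 1 := by
    apply ContinuousOn.intervalIntegrable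
    rwa [Set.uIcc_of_le (zero_le_one : (0:ℝ) ≤ 1)]
  have hintf : (∫ u in (0:ℝ)..1, f u) = -1 := by
    rw [intervalIntegral.integral_eq_sub_of_hasDeriv_right_of_le zero_le_one hgc
      (fun x hx => (hgderiv x hx).hasDerivWithinAt) hfint, hg1, hg0]
    norm_num
  -- the identity for L ≥ 1
  have key : ∀ L : ℝ, 1 ≤ L →
      (∫ t in (0:ℝ)..L, g (t / L) * q t)
        = A - ∫ u in (0:ℝ)..1, f u * (Q (L * u) - A) := by
    intro L hL
    have hL0 : (0:ℝ) < L := lt_of_lt_of_le one_pos hL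
    have hLne : L ≠ 0 := ne_of_gt hL0
    have hdivmaps : Set.MapsTo (fun t : ℝ => t / L) (Set.Icc 0 L) (Set.Icc 0 1) := by
      intro t ht
      exact ⟨div_nonneg ht.1 hL0.le, (div_le_one hL0).mpr ht.2⟩
    have hu_cont : ContinuousOn (fun t => g (t / L)) (Set.Icc (0:ℝ) L) :=
      hgc.comp (continuous_id.div_const L).continuousOn hdivmaps
    have hfL_cont : ContinuousOn (fun t => f (t / L) * (1 / L)) (Set.Icc (0:ℝ) L) :=
      (hfc.comp (continuous_id.div_const L).continuousOn hdivmaps).mul continuousOn_const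
    have hicc : Set.uIcc (0:ℝ) L = Set.Icc 0 L := Set.uIcc_of_le hL0.le
    have hmin : min (0:ℝ) L = 0 := min_eq_left hL0.le
    have hmax : max (0:ℝ) L = L := max_eq_right hL0.le
    have hparts := intervalIntegral.integral_mul_deriv_eq_deriv_mul_of_hasDeriv_right
      (u := fun t => g (t / L)) (v := Q) (u' := fun t => f (t / L) * (1 / L)) (v' := q)
      (by rwa [hicc]) hQc.continuousOn
      (by
        rw [hmin, hmax]
        intro x hx
        have hx01 : x / L ∈ Set.Ioo (0:ℝ) 1 := ⟨div_pos hx.1 hL0, (div_lt_one hL0).mpr hx.2⟩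
        have h1 : HasDerivAt (fun t : ℝ => t / L) (1 / L) x := by
          simpa using (hasDerivAt_id x).div_const L
        exact (((hgderiv _ hx01).comp x h1)).hasDerivWithinAt)
      (by
        rw [hmin, hmax]
        intro x _
        exact (hQd x).hasDerivWithinAt)
      (by rw [intervalIntegrable_iff_integrableOn_Icc_of_le hL0.le]
          exact hfL_cont.integrableOn_compact isCompact_Icc)
      (hq.intervalIntegrable 0 L)
    have hdivL : L / L = 1 := div_self hLne
    have hQ0 : Q 0 = 0 := intervalIntegral.integral_same
    rw [hparts]
    simp only [hdivL, hg1, hQ0, zero_mul, mul_zero, zero_sub, sub_zero]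
    -- now : -∫ x in 0..L, f (x/L) * (1/L) * Q x = A - ∫ u in 0..1, f u * (Q (L*u) - A)
    have hsub : (∫ x in (0:ℝ)..L, f (x / L) * (1 / L) * Q x)
        = ∫ u in (0:ℝ)..1, f u * Q (L * u) := by
      have e1 := intervalIntegral.integral_comp_mul_left
        (a := (0:ℝ)) (b := 1) (fun t => f (t / L) * (1 / L) * Q t) hLne
      simp only [mul_zero, mul_one] at e1
      have e2 : (∫ x in (0:ℝ)..1, f (L * x / L) * (1 / L) * Q (L * x))
          = ∫ x in (0:ℝ)..1, (1 / L) * (f x * Q (L * x)) := by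
        apply intervalIntegral.integral_congr
        intro x _
        show f (L * x / L) * (1 / L) * Q (L * x) = 1 / L * (f x * Q (L * x))
        rw [mul_div_cancel_left₀ _ hLne]
        ring
      rw [e2, intervalIntegral.integral_const_mul] at e1
      simp only [smul_eq_mul] at e1
      have e3 : L * (1 / L * ∫ (x : ℝ) in (0:ℝ)..1, f x * Q (L * x))
          = L * (L⁻¹ * ∫ (x : ℝ) in (0:ℝ)..L, f (x / L) * (1 / L) * Q x) := by rw [e1]
      rw [← mul_assoc, ← mul_assoc, mul_one_div, hdivL, one_mul, mul_inv_cancel₀ hLne,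
        one_mul] at e3
      exact e3.symm
    rw [hsub]
    have hsplit : (∫ u in (0:ℝ)..1, f u * Q (L * u))
        = (∫ u in (0:ℝ)..1, f u * (Q (L * u) - A)) + A * ∫ u in (0:ℝ)..1, f u := by
      rw [← intervalIntegral.integral_const_mul, ← intervalIntegral.integral_add]
      · apply intervalIntegral.integral_congr
        intro x _
        ring
      · apply ContinuousOn.intervalIntegrable
        rw [Set.uIcc_of_le (zero_le_one : (0:ℝ) ≤ 1)]
        exact hfc.mul (((hQc.comp (continuous_const.mul continuous_id)).continuousOn).sub
          continuousOn_const)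
      · apply ContinuousOn.intervalIntegrable
        rw [Set.uIcc_of_le (zero_le_one : (0:ℝ) ≤ 1)]
        exact continuousOn_const.mul hfc
    rw [hsplit, hintf]
    ring
  -- conclude via the equidistribution lemma
  have hPper : Function.Periodic (fun x => Q x - A) 1 := fun x => by
    simp only [hQper x]
  have hPmean : (∫ t in (0:ℝ)..1, (Q t - A)) = 0 := by
    rw [intervalIntegral.integral_sub (hQc.intervalIntegrable 0 1) intervalIntegrable_const]
    simp [← hAdef]
  have heq := cont_equidistribution (fun x => Q x - A) (hQc.sub continuous_const) hPper
    hPmean f hfc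
  have hlim : Tendsto (fun L : ℝ => A - ∫ u in (0:ℝ)..1, f u * (Q (L * u) - A))
      atTop (nhds A) := by
    have := (tendsto_const_nhds (x := A) (f := atTop (α := ℝ))).sub heq
    simpa using this
  apply hlim.congr'
  filter_upwards [eventually_ge_atTop (1:ℝ)] with L hL
  exact (key L hL).symm
/-- **Equivalence of the two definitions of the total edge current.**
If `j : [0,∞) → ℝ` is continuous and approaches, in the `L¹` sense, a continuous
`1`-periodic function `q` with vanishing mean, then for any `g ∈ C¹([0,1])` with
`g 0 = 1`, `g 1 = 0`, the limits `lim_{L→∞} ∫₀ᴸ g(t/L) j(t) dt` and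
`lim_{L→∞} ∫_L^{L+1} (∫₀ᵗ j) dt` both exist and are equal; in particular the first
limit is independent of `g`. -/
theorem total_edge_current_two_definitions
    (j : ℝ → ℝ) (hj : ContinuousOn j (Set.Ici (0:ℝ)))
    (q : ℝ → ℝ) (hq : Continuous q) (hqper : ∀ t : ℝ, q (t + 1) = q t)
    (hqavg : (∫ t in (0:ℝ)..1, q t) = 0)
    (hint : IntegrableOn (fun t => j t - q t) (Set.Ici (0:ℝ)))
    (g : ℝ → ℝ) (hg : ContDiffOn ℝ 1 g (Set.Icc (0:ℝ) 1))
    (hg0 : g 0 = 1) (hg1 : g 1 = 0) :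
    ∃ c : ℝ,
      Tendsto (fun L : ℝ => ∫ t in (0:ℝ)..L, g (t / L) * j t) atTop (nhds c) ∧
      Tendsto (fun L : ℝ => ∫ t in L..(L + 1), (∫ s in (0:ℝ)..t, j s)) atTop (nhds c) := by
  have hqper' : Function.Periodic q 1 := hqper
  set r : ℝ → ℝ := Set.indicator (Set.Ici (0:ℝ)) (fun t => j t - q t) with hrdef
  have hrint : Integrable r := by
    rw [hrdef, integrable_indicator_iff measurableSet_Ici]
    exact hint
  set Q : ℝ → ℝ := fun x => ∫ s in (0:ℝ)..x, q s with hQdef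
  set A : ℝ := ∫ u in (0:ℝ)..1, Q u with hAdef
  set c₀ : ℝ := ∫ t in Set.Ioi (0:ℝ), r t with hc₀def
  have hQd : ∀ x : ℝ, HasDerivAt Q (q x) x := fun x =>
    (hq.integral_hasStrictDerivAt 0 x).hasDerivAt
  have hQc : Continuous Q := by
    rw [continuous_iff_continuousAt]; exact fun x => (hQd x).continuousAt
  have hQper : Function.Periodic Q 1 := periodic_primitive q hq hqper' hqavg
  obtain ⟨Mg, hMg⟩ := isCompact_Icc.exists_bound_of_continuousOn
    (s := Set.Icc (0:ℝ) 1) hg.continuousOn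
  have hMg0 : 0 ≤ Mg := le_trans (norm_nonneg _) (hMg 0 ⟨le_rfl, zero_le_one⟩)
  refine ⟨A + c₀, ?_, ?_⟩
  · -- first definition
    have hq1 : Tendsto (fun L : ℝ => ∫ t in (0:ℝ)..L, g (t / L) * q t) atTop (nhds A) := by
      rw [hAdef, hQdef]
      exact qterm_tendsto q hq hqper' hqavg g hg hg0 hg1
    -- dominated convergence for the r-part
    have hdct : Tendsto
        (fun L : ℝ => ∫ t in Set.Ioi (0:ℝ), Set.indicator (Set.Ioc 0 L) (fun t => g (t / L) * r t) t)
        atTop (nhds c₀) := by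
      rw [hc₀def]
      apply MeasureTheory.tendsto_integral_filter_of_dominated_convergence (bound := fun t => Mg * ‖r t‖)
      · filter_upwards [eventually_gt_atTop (0:ℝ)] with L hL0
        rw [aestronglyMeasurable_indicator_iff measurableSet_Ioc,
          Measure.restrict_restrict measurableSet_Ioc,
          Set.inter_eq_self_of_subset_left Set.Ioc_subset_Ioi_self]
        apply AEStronglyMeasurable.mul
        · apply ContinuousOn.aestronglyMeasurable _ measurableSet_Ioc
          exact hg.continuousOn.comp (continuous_id.div_const L).continuousOn
            (fun t ht => ⟨div_nonneg ht.1.le hL0.le, (div_le_one hL0).mpr ht.2⟩)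
        · exact hrint.1.restrict
      · filter_upwards [eventually_gt_atTop (0:ℝ)] with L hL0
        apply ae_of_all
        intro t
        by_cases ht : t ∈ Set.Ioc (0:ℝ) L
        · rw [Set.indicator_of_mem ht, norm_mul]
          exact mul_le_mul_of_nonneg_right
            (hMg _ ⟨div_nonneg ht.1.le hL0.le, (div_le_one hL0).mpr ht.2⟩) (norm_nonneg _)
        · rw [Set.indicator_of_notMem ht]
          simp only [norm_zero]
          positivity
      · exact (hrint.norm.const_mul Mg).restrict
      · filter_upwards [ae_restrict_mem measurableSet_Ioi] with t ht
        have h1 : Tendsto (fun L : ℝ => t / L) atTop (nhds 0) :=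
          tendsto_const_nhds.div_atTop tendsto_id
        have hmem : ∀ᶠ L : ℝ in atTop, t / L ∈ Set.Icc (0:ℝ) 1 := by
          filter_upwards [eventually_ge_atTop (max t 1)] with L hL
          have hL0 : (0:ℝ) < L := lt_of_lt_of_le one_pos (le_trans (le_max_right t 1) hL)
          exact ⟨div_nonneg (le_of_lt ht) hL0.le,
            (div_le_one hL0).mpr (le_trans (le_max_left t 1) hL)⟩
        have h2 : Tendsto (fun L : ℝ => g (t / L)) atTop (nhds 1) := by
          rw [← hg0]
          exact (hg.continuousOn 0 ⟨le_rfl, zero_le_one⟩).tendsto.comp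
            (tendsto_nhdsWithin_iff.mpr ⟨h1, hmem⟩)
        have h3 : Tendsto (fun L : ℝ => g (t / L) * r t) atTop (nhds (r t)) := by
          simpa using h2.mul (tendsto_const_nhds (x := r t))
        apply Filter.Tendsto.congr' _ h3
        filter_upwards [eventually_ge_atTop (max t 1)] with L hL
        rw [Set.indicator_of_mem (show t ∈ Set.Ioc (0:ℝ) L from ⟨ht, le_trans (le_max_left t 1) hL⟩)]
    -- identify the r-part with the difference of interval integrals
    have hrterm : Tendsto
        (fun L : ℝ => (∫ t in (0:ℝ)..L, g (t / L) * j t) - ∫ t in (0:ℝ)..L, g (t / L) * q t)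
        atTop (nhds c₀) := by
      apply hdct.congr'
      filter_upwards [eventually_ge_atTop (1:ℝ)] with L hL
      have hL0 : (0:ℝ) < L := lt_of_lt_of_le one_pos hL
      have hdivmaps : Set.MapsTo (fun t : ℝ => t / L) (Set.Icc 0 L) (Set.Icc 0 1) := by
        intro t ht
        exact ⟨div_nonneg ht.1 hL0.le, (div_le_one hL0).mpr ht.2⟩
      have hu_cont : ContinuousOn (fun t => g (t / L)) (Set.Icc (0:ℝ) L) :=
        hg.continuousOn.comp (continuous_id.div_const L).continuousOn hdivmaps
      have hjint : IntervalIntegrable (fun t => g (t / L) * j t) volume 0 L := by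
        rw [intervalIntegrable_iff_integrableOn_Icc_of_le hL0.le]
        exact ((hu_cont.mul (hj.mono (fun t ht => ht.1))).integrableOn_compact isCompact_Icc)
      have hqint : IntervalIntegrable (fun t => g (t / L) * q t) volume 0 L := by
        rw [intervalIntegrable_iff_integrableOn_Icc_of_le hL0.le]
        exact ((hu_cont.mul hq.continuousOn).integrableOn_compact isCompact_Icc)
      rw [← intervalIntegral.integral_sub hjint hqint]
      have hcong : ∀ t ∈ Set.uIcc (0:ℝ) L,
          g (t / L) * j t - g (t / L) * q t = g (t / L) * r t := by
        intro t ht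
        rw [Set.uIcc_of_le hL0.le] at ht
        rw [hrdef, Set.indicator_of_mem (show t ∈ Set.Ici (0:ℝ) from ht.1)]
        ring
      rw [intervalIntegral.integral_congr hcong, intervalIntegral.integral_of_le hL0.le,
        MeasureTheory.setIntegral_indicator measurableSet_Ioc,
        Set.inter_eq_self_of_subset_right Set.Ioc_subset_Ioi_self]
    have := hq1.add hrterm
    apply this.congr
    intro L
    ring
  · -- second definition
    set R : ℝ → ℝ := fun x => ∫ s in (0:ℝ)..x, r s with hRdef
    have hRc : Continuous R :=
      intervalIntegral.continuous_primitive (fun a b => hrint.intervalIntegrable) 0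
    have hRlim : Tendsto R atTop (nhds c₀) := by
      rw [hc₀def, hRdef]
      exact intervalIntegral_tendsto_integral_Ioi 0 hrint.integrableOn tendsto_id
    have hQint_eq : ∀ L : ℝ, (∫ t in L..(L+1), Q t) = A := by
      intro L
      have h := hQper.intervalIntegral_add_eq L 0
      rw [h, hAdef]
      norm_num
    have key2 : ∀ L : ℝ, 0 ≤ L →
        (∫ t in L..(L+1), (∫ s in (0:ℝ)..t, j s)) = A + ∫ t in L..(L+1), R t := by
      intro L hL0
      have h1 : ∀ t ∈ Set.uIcc L (L+1), (∫ s in (0:ℝ)..t, j s) = Q t + R t := by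
        intro t ht
        rw [Set.uIcc_of_le (by linarith : L ≤ L + 1)] at ht
        have ht0 : 0 ≤ t := le_trans hL0 ht.1
        have hcong : ∀ s ∈ Set.uIcc (0:ℝ) t, j s = q s + r s := by
          intro s hs
          rw [Set.uIcc_of_le ht0] at hs
          rw [hrdef, Set.indicator_of_mem (show s ∈ Set.Ici (0:ℝ) from hs.1)]
          ring
        rw [intervalIntegral.integral_congr hcong,
          intervalIntegral.integral_add (hq.intervalIntegrable 0 t) hrint.intervalIntegrable]
      rw [intervalIntegral.integral_congr h1,
        intervalIntegral.integral_add (hQc.intervalIntegrable _ _) (hRc.intervalIntegrable _ _),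
        hQint_eq L]
    have hRint2 : Tendsto (fun L : ℝ => ∫ t in L..(L+1), R t) atTop (nhds c₀) := by
      have h0 : Tendsto (fun L : ℝ => (∫ t in L..(L+1), R t) - c₀) atTop (nhds 0) := by
        rw [NormedAddCommGroup.tendsto_nhds_zero]
        intro ε hε
        rw [Metric.tendsto_atTop] at hRlim
        obtain ⟨N, hN⟩ := hRlim (ε/2) (by positivity)
        filter_upwards [eventually_ge_atTop N] with L hL
        have heq : (∫ t in L..(L+1), R t) - c₀ = ∫ t in L..(L+1), (R t - c₀) := by
          rw [intervalIntegral.integral_sub (hRc.intervalIntegrable _ _) intervalIntegrable_const,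
            intervalIntegral.integral_const]
          simp
        rw [heq]
        have hb : ‖∫ t in L..(L+1), (R t - c₀)‖ ≤ (ε/2) * |L + 1 - L| := by
          apply intervalIntegral.norm_integral_le_of_norm_le_const
          intro t ht
          rw [Set.uIoc_of_le (by linarith : L ≤ L + 1)] at ht
          have := hN t (le_trans hL ht.1.le)
          rw [Real.dist_eq] at this
          rw [Real.norm_eq_abs]
          exact this.le
        calc ‖∫ t in L..(L+1), (R t - c₀)‖ ≤ (ε/2) * |L + 1 - L| := hb
          _ < ε := by
              rw [show (L + 1 - L : ℝ) = 1 by ring, abs_one, mul_one]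
              linarith
      have h1 := h0.add (tendsto_const_nhds (x := c₀))
      simpa using h1
    have hfinal := (tendsto_const_nhds (x := A) (f := atTop (α := ℝ))).add hRint2
    apply hfinal.congr'
    filter_upwards [eventually_ge_atTop (0:ℝ)] with L hL
    exact (key2 L hL).symm
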